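/- arXiv:2208.14290 — 2 statements merged into one kernel-verified Lean document; each statement's English description precedes it below -/
import Mathlib

section
/- Fault explanation soundness (irrelevance by inclusion): if {Init} w1 {P}, {P} w2 {R}, and {R} w3 {false} are valid Hoare triples and P ⊑ R, then {Init} w1.w3 {false} is valid; i.e., removing the irrelevant segment w2 still yields a witness of the fault. -/
/-- Step sequences along a trace (list of symbols). -/
def Steps {C S : Type*} (step : C → S → C → Prop) : C → List S → C → Prop
  | c, [], c' => c = c'
  | c, s :: w, c' => ∃ c'', step c s c'' ∧ Steps step c'' w c'

/-- Hoare validity up to a trace equivalence. -/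
def HoareValid {C S : Type*} (step : C → S → C → Prop)
    (equiv : List S → List S → Prop)
    (P : Set C) (w : List S) (R : Set C) : Prop :=
  ∀ cf ∈ P, ∀ u, equiv u w → ∀ cf', Steps step cf u cf' → cf' ∈ R


lemma Steps_append_split {C S : Type*} (step : C → S → C → Prop) :
    ∀ (u1 u2 : List S) (c c' : C), Steps step c (u1 ++ u2) c' →
      ∃ cm, Steps step c u1 cm ∧ Steps step cm u2 c' := by
  intro u1
  induction u1 with
  | nil => intro u2 c c' h; exact ⟨c, rfl, h⟩
  | cons s t ih =>
    intro u2 c c' h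
    obtain ⟨c'', hs, hrest⟩ := h
    obtain ⟨cm, h1, h2⟩ := ih u2 c'' c' hrest
    exact ⟨cm, ⟨c'', hs, h1⟩, h2⟩

/-- Fault explanation soundness (irrelevance by inclusion): if
`{Init} w1 {P}`, `{P} w2 {R}`, and `{R} w3 {false}` are valid and `P ⊑ R`,
then `{Init} w1.w3 {false}` is valid — removing the irrelevant segment `w2`
still yields a witness of the fault. Requires that the trace equivalence
admits decomposition of concatenations. -/
theorem explanation_inclusion_sound {C S : Type*}
    (step : C → S → C → Prop) (equiv : List S → List S → Prop)
    (hDecomp : ∀ u w1 w2 : List S, equiv u (w1 ++ w2) →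
      ∃ u1 u2, equiv u1 w1 ∧ equiv u2 w2 ∧ u = u1 ++ u2)
    (Init P R : Set C) (w1 w2 w3 : List S)
    (h1 : HoareValid step equiv Init w1 P)
    (h2 : HoareValid step equiv P w2 R)
    (h3 : HoareValid step equiv R w3 (∅ : Set C))
    (hPR : P ⊆ R) :
    HoareValid step equiv Init (w1 ++ w3) (∅ : Set C) := by
  intro cf hcf u hu cf' hsteps
  obtain ⟨u1, u3, he1, he3, rfl⟩ := hDecomp u w1 w3 hu
  obtain ⟨cm, hs1, hs3⟩ := Steps_append_split step u1 u3 cf cf' hsteps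
  have hP : cm ∈ P := h1 cf hcf u1 he1 cm hs1
  exact h3 cm (hPR hP) u3 he3 cf' hs3
end

section
/- Fault explanation soundness (irrelevance by time projection): if {Init} w1 {P}, {R} w3 {false}, and {P} π(w2) {R} are valid, where π(w2) removes all events from w2 keeping only its time progressions, then {Init} w1.π(w2).w3 {false} is valid. -/
open scoped NNReal

lemma Steps_append {C S : Type*} (step : C → S → C → Prop) :
    ∀ (u1 u2 : List S) (c c' : C), Steps step c (u1 ++ u2) c' →
      ∃ m, Steps step c u1 m ∧ Steps step m u2 c' := by
  intro u1
  induction u1 with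
  | nil => intro u2 c c' h; exact ⟨c, rfl, h⟩
  | cons s t ih =>
    intro u2 c c' h
    obtain ⟨c'', hs, hrest⟩ := h
    obtain ⟨m, hm1, hm2⟩ := ih u2 c'' c' hrest
    exact ⟨m, ⟨c'', hs, hm1⟩, hm2⟩

/-- The time projection `π`: remove all events from a trace, keeping only
its time progressions. -/
def timeProj {E : Type*} (w : List (E ⊕ ℝ≥0)) : List (E ⊕ ℝ≥0) :=
  w.filterMap fun s => match s with
    | Sum.inl _ => none
    | Sum.inr t => some (Sum.inr t)

/-- Fault explanation soundness (irrelevance by time projection): if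
`{Init} w1 {P}`, `{R} w3 {false}`, and `{P} π(w2) {R}` are valid, then
`{Init} w1.π(w2).w3 {false}` is valid. Requires that the trace equivalence
admits decomposition of concatenations. -/
theorem explanation_projection_sound {C E : Type*}
    (step : C → (E ⊕ ℝ≥0) → C → Prop)
    (equiv : List (E ⊕ ℝ≥0) → List (E ⊕ ℝ≥0) → Prop)
    (hDecomp : ∀ u w1 w2 : List (E ⊕ ℝ≥0), equiv u (w1 ++ w2) →
      ∃ u1 u2, equiv u1 w1 ∧ equiv u2 w2 ∧ u = u1 ++ u2)
    (Init P R : Set C) (w1 w2 w3 : List (E ⊕ ℝ≥0))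
    (h1 : HoareValid step equiv Init w1 P)
    (h3 : HoareValid step equiv R w3 (∅ : Set C))
    (h2 : HoareValid step equiv P (timeProj w2) R) :
    HoareValid step equiv Init (w1 ++ timeProj w2 ++ w3) (∅ : Set C) := by
  intro cf hcf u hu cf' hsteps
  rw [List.append_assoc] at hu
  obtain ⟨u1, u23, hu1, hu23, rfl⟩ := hDecomp _ _ _ hu
  obtain ⟨u2, u3, hu2, hu3, rfl⟩ := hDecomp _ _ _ hu23
  rw [← List.append_assoc] at hsteps
  obtain ⟨m2, h12, hs3⟩ := Steps_append step _ _ _ _ hsteps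
  obtain ⟨m1, hs1, hs2⟩ := Steps_append step _ _ _ _ h12
  exact h3 m2 (h2 m1 (h1 cf hcf u1 hu1 m1 hs1) u2 hu2 m2 hs2) u3 hu3 cf' hs3
end
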